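/- Let m, n ∈ ℝ³ be unit vectors with m ⊥ n, and let U be an element of SU(2) (a 2×2 complex unitary matrix with determinant 1). Then there exist real numbers β, γ, δ such that U = R_n(β) · R_m(γ) · R_n(δ). -/

import Mathlib

open Matrix

noncomputable section

def σx : Matrix (Fin 2) (Fin 2) ℂ := !![0, 1; 1, 0]
def σy : Matrix (Fin 2) (Fin 2) ℂ := !![0, -Complex.I; Complex.I, 0]
def σz : Matrix (Fin 2) (Fin 2) ℂ := !![1, 0; 0, -1]

/-- Rotation through angle `θ` about the axis directed along `v`:
`R_v(θ) = cos(θ/2)·I − i·sin(θ/2)·(v_x σx + v_y σy + v_z σz)`. -/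
def Rvec (v : Fin 3 → ℝ) (θ : ℝ) : Matrix (Fin 2) (Fin 2) ℂ :=
  (Real.cos (θ / 2) : ℂ) • (1 : Matrix (Fin 2) (Fin 2) ℂ)
    - (Complex.I * (Real.sin (θ / 2) : ℂ)) •
      ((v 0 : ℂ) • σx + (v 1 : ℂ) • σy + (v 2 : ℂ) • σz)

/-- cross product of two 3-vectors -/
def crs (n m : Fin 3 → ℝ) : Fin 3 → ℝ :=
  ![n 1 * m 2 - n 2 * m 1, n 2 * m 0 - n 0 * m 2, n 0 * m 1 - n 1 * m 0]

lemma su2aux_complete (n m : Fin 3 → ℝ)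
    (hn : n 0 ^ 2 + n 1 ^ 2 + n 2 ^ 2 = 1)
    (hm : m 0 ^ 2 + m 1 ^ 2 + m 2 ^ 2 = 1)
    (hmn : m 0 * n 0 + m 1 * n 1 + m 2 * n 2 = 0) :
    ∀ i j, n i * n j + m i * m j + crs n m i * crs n m j
      = if i = j then 1 else 0 := by
  have hq0 : crs n m 0 = n 1 * m 2 - n 2 * m 1 := rfl
  have hq1 : crs n m 1 = n 2 * m 0 - n 0 * m 2 := rfl
  have hq2 : crs n m 2 = n 0 * m 1 - n 1 * m 0 := rfl
  set q := crs n m with hq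
  have hP : (!![n 0, n 1, n 2; m 0, m 1, m 2; q 0, q 1, q 2] *
      !![n 0, m 0, q 0; n 1, m 1, q 1; n 2, m 2, q 2] : Matrix (Fin 3) (Fin 3) ℝ) = 1 := by
    ext i j
    fin_cases i <;> fin_cases j <;>
      simp [Matrix.mul_apply, Fin.sum_univ_three, Matrix.one_apply, hq0, hq1, hq2] <;>
    first
      | linear_combination hn
      | linear_combination hm
      | linear_combination hmn
      | linear_combination (m 0 ^ 2 + m 1 ^ 2 + m 2 ^ 2) * hn + hm -
          (m 0 * n 0 + m 1 * n 1 + m 2 * n 2) * hmn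
      | ring
  have hP' := mul_eq_one_comm.mp hP
  intro i j
  have h2 := congrFun (congrFun hP' i) j
  fin_cases i <;> fin_cases j <;>
    · simp [Matrix.mul_apply, Fin.sum_univ_three, Matrix.one_apply] at h2 ⊢
      linarith [h2]

def pauli (v : Fin 3 → ℝ) : Matrix (Fin 2) (Fin 2) ℂ :=
  (v 0 : ℂ) • σx + (v 1 : ℂ) • σy + (v 2 : ℂ) • σz

lemma pauli_sq (v : Fin 3 → ℝ) (hv : v 0 ^ 2 + v 1 ^ 2 + v 2 ^ 2 = 1) :
    pauli v * pauli v = 1 := by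
  have hvC : (v 0 : ℂ) ^ 2 + (v 1 : ℂ) ^ 2 + (v 2 : ℂ) ^ 2 = 1 := by exact_mod_cast hv
  ext i j
  fin_cases i <;> fin_cases j <;>
    simp [pauli, σx, σy, σz, Matrix.mul_apply, Fin.sum_univ_two, Matrix.one_apply] <;>
    (try (ring_nf; simp only [Complex.I_sq])) <;>
    first
      | linear_combination hvC
      | linear_combination -hvC
      | ring

lemma pauli_anticomm (v w : Fin 3 → ℝ)
    (hvw : v 0 * w 0 + v 1 * w 1 + v 2 * w 2 = 0) :
    pauli v * pauli w = -(pauli w * pauli v) := by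
  have hC : (v 0 : ℂ) * w 0 + (v 1 : ℂ) * w 1 + (v 2 : ℂ) * w 2 = 0 := by exact_mod_cast hvw
  ext i j
  fin_cases i <;> fin_cases j <;>
    simp [pauli, σx, σy, σz, Matrix.mul_apply, Fin.sum_univ_two] <;>
    (try (ring_nf; simp only [Complex.I_sq])) <;>
    first
      | linear_combination 2 * hC
      | linear_combination -(2 * hC)
      | linear_combination 2 * Complex.I * hC
      | linear_combination -(2 * Complex.I * hC)
      | ring

lemma pauli_mul (v w : Fin 3 → ℝ)
    (hvw : v 0 * w 0 + v 1 * w 1 + v 2 * w 2 = 0) :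
    pauli v * pauli w = Complex.I • pauli (crs v w) := by
  have hC : (v 0 : ℂ) * w 0 + (v 1 : ℂ) * w 1 + (v 2 : ℂ) * w 2 = 0 := by exact_mod_cast hvw
  have hq0 : crs v w 0 = v 1 * w 2 - v 2 * w 1 := rfl
  have hq1 : crs v w 1 = v 2 * w 0 - v 0 * w 2 := rfl
  have hq2 : crs v w 2 = v 0 * w 1 - v 1 * w 0 := rfl
  ext i j
  fin_cases i <;> fin_cases j <;>
    simp [pauli, σx, σy, σz, Matrix.mul_apply, Fin.sum_univ_two, hq0, hq1, hq2] <;>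
    (try (ring_nf; simp only [Complex.I_sq])) <;>
    first
      | linear_combination hC
      | linear_combination -hC
      | linear_combination Complex.I * hC
      | linear_combination -(Complex.I * hC)
      | ring

lemma su2_repr (U : Matrix (Fin 2) (Fin 2) ℂ)
    (hU : U ∈ Matrix.unitaryGroup (Fin 2) ℂ) (hdet : U.det = 1) :
    ∃ a0 a1 a2 a3 : ℝ, a0 ^ 2 + a1 ^ 2 + a2 ^ 2 + a3 ^ 2 = 1 ∧
      U = (a0 : ℂ) • (1 : Matrix (Fin 2) (Fin 2) ℂ)
        - Complex.I • ((a1 : ℂ) • σx + (a2 : ℂ) • σy + (a3 : ℂ) • σz) := by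
  obtain ⟨h1, h2⟩ := Unitary.mem_iff.mp hU
  have hadj : star U = U.adjugate := by
    calc star U = star U * (U * U.adjugate) := by
          rw [Matrix.mul_adjugate, hdet, one_smul, mul_one]
      _ = (star U * U) * U.adjugate := by rw [mul_assoc]
      _ = U.adjugate := by rw [h1, one_mul]
  rw [Matrix.adjugate_fin_two] at hadj
  have h00 : (starRingEnd ℂ) (U 0 0) = U 1 1 := by
    have := congrFun (congrFun hadj 0) 0
    simpa [Matrix.star_apply] using this
  have h01 : (starRingEnd ℂ) (U 1 0) = -U 0 1 := by
    have := congrFun (congrFun hadj 0) 1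
    simpa [Matrix.star_apply] using this
  refine ⟨(U 0 0).re, -(U 0 1).im, -(U 0 1).re, -(U 0 0).im, ?_, ?_⟩
  · have hd := hdet
    rw [Matrix.det_fin_two] at hd
    have h11 : U 1 1 = (starRingEnd ℂ) (U 0 0) := h00.symm
    have h10 : U 1 0 = -(starRingEnd ℂ) (U 0 1) := by
      have := congrArg (starRingEnd ℂ) h01
      simpa using this
    rw [h11, h10] at hd
    have := congrArg Complex.re hd
    simp [Complex.mul_conj, Complex.normSq_apply, Complex.mul_re, Complex.conj_re,
      Complex.conj_im] at this
    nlinarith [this]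
  · have h11 : U 1 1 = (starRingEnd ℂ) (U 0 0) := h00.symm
    have h10 : U 1 0 = -(starRingEnd ℂ) (U 0 1) := by
      have := congrArg (starRingEnd ℂ) h01
      simpa using this
    ext i j
    fin_cases i <;> fin_cases j <;>
      simp [σx, σy, σz, h11, h10, Matrix.one_apply] <;>
      apply Complex.ext <;> simp [Complex.conj_re, Complex.conj_im] <;> ring

lemma triple_prod (N M Q : Matrix (Fin 2) (Fin 2) ℂ)
    (hNN : N * N = 1) (hNM : N * M = Complex.I • Q) (hMN : M * N = -(N * M))
    (cb sb cg sg cd sd : ℂ) :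
    ((cb • (1 : Matrix (Fin 2) (Fin 2) ℂ) - (Complex.I * sb) • N) *
      (cg • (1 : Matrix (Fin 2) (Fin 2) ℂ) - (Complex.I * sg) • M)) *
      (cd • (1 : Matrix (Fin 2) (Fin 2) ℂ) - (Complex.I * sd) • N)
    = (cg * (cb * cd - sb * sd)) • 1 -
        Complex.I • ((cg * (sb * cd + cb * sd)) • N + (sg * (cb * cd + sb * sd)) • M
          + (sg * (sb * cd - cb * sd)) • Q) := by
  have hMN' : M * N = -(Complex.I • Q) := by rw [hMN, hNM]
  have hNMN : N * (M * N) = -M := by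
    rw [hMN, mul_neg, ← mul_assoc, hNN, one_mul]
  have hQ : Q = (-Complex.I) • (N * M) := by
    rw [hNM, smul_smul]
    simp [Complex.I_mul_I]
  have hNQ : N * Q = (-Complex.I) • M := by
    rw [hQ, mul_smul_comm, ← mul_assoc, hNN, one_mul]
  have hQN : Q * N = Complex.I • M := by
    rw [hQ, smul_mul_assoc, mul_assoc, hNMN, smul_neg]
    simp
  simp only [sub_mul, mul_sub, smul_mul_assoc, mul_smul_comm, one_mul, mul_one, smul_smul,
    mul_assoc, hNN, hNMN, hMN', hNM, hNQ, hQN]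
  match_scalars
  · linear_combination (cg * sd * sb) * Complex.I_sq
  · ring
  · linear_combination (-(Complex.I * sg * sd * sb) * (Complex.I ^ 2 - 1)) * Complex.I_sq
  · linear_combination (Complex.I * (cd * sg * sb - sg * sd * cb)) * Complex.I_sq

lemma le_one_of_sq_add_sq (r s : ℝ) (h0 : 0 ≤ r) (h : r ^ 2 + s ^ 2 = 1) : r ≤ 1 := by
  nlinarith [sq_nonneg s]

lemma circle_param (x y : ℝ) :
    ∃ t : ℝ, Real.sqrt (x ^ 2 + y ^ 2) * Real.cos t = x ∧
      Real.sqrt (x ^ 2 + y ^ 2) * Real.sin t = y := by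
  rcases eq_or_ne (Real.sqrt (x ^ 2 + y ^ 2)) 0 with h | h
  · have hle := Real.sqrt_eq_zero'.mp h
    have hx : x ^ 2 = 0 := le_antisymm (by nlinarith [sq_nonneg y]) (sq_nonneg x)
    have hy : y ^ 2 = 0 := le_antisymm (by nlinarith [sq_nonneg x]) (sq_nonneg y)
    refine ⟨0, ?_, ?_⟩ <;>
      simp [h, pow_eq_zero_iff, two_ne_zero] at hx hy ⊢ <;> simp [hx, hy]
  · set z : ℂ := ⟨x, y⟩ with hz
    have habs : ‖z‖ = Real.sqrt (x ^ 2 + y ^ 2) := by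
      rw [Complex.norm_def]
      congr 1
      rw [Complex.normSq_mk]
      ring
    have hz0 : z ≠ 0 := by
      intro h0
      apply h
      rw [← habs, h0]
      simp
    refine ⟨Complex.arg z, ?_, ?_⟩
    · rw [Complex.cos_arg hz0, habs]
      have : z.re = x := rfl
      rw [this]
      field_simp
    · rw [Complex.sin_arg, habs]
      have : z.im = y := rfl
      rw [this]
      field_simp
theorem su2_euler_decomposition (m n : Fin 3 → ℝ)
    (hm : m 0 ^ 2 + m 1 ^ 2 + m 2 ^ 2 = 1)
    (hn : n 0 ^ 2 + n 1 ^ 2 + n 2 ^ 2 = 1)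
    (hmn : m 0 * n 0 + m 1 * n 1 + m 2 * n 2 = 0)
    (U : Matrix (Fin 2) (Fin 2) ℂ)
    (hU : U ∈ Matrix.unitaryGroup (Fin 2) ℂ)
    (hdet : U.det = 1) :
    ∃ β γ δ : ℝ, U = Rvec n β * Rvec m γ * Rvec n δ := by
  obtain ⟨a0, a1, a2, a3, hnorm, hUrepr⟩ := su2_repr U hU hdet
  have hnm : n 0 * m 0 + n 1 * m 1 + n 2 * m 2 = 0 := by linear_combination hmn
  have E := su2aux_complete n m hn hm hmn
  have E00 : n 0 * n 0 + m 0 * m 0 + crs n m 0 * crs n m 0 = 1 := by simpa using E 0 0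
  have E11 : n 1 * n 1 + m 1 * m 1 + crs n m 1 * crs n m 1 = 1 := by simpa using E 1 1
  have E22 : n 2 * n 2 + m 2 * m 2 + crs n m 2 * crs n m 2 = 1 := by simpa using E 2 2
  have E01 : n 0 * n 1 + m 0 * m 1 + crs n m 0 * crs n m 1 = 0 := by simpa using E 0 1
  have E02 : n 0 * n 2 + m 0 * m 2 + crs n m 0 * crs n m 2 = 0 := by simpa using E 0 2
  have E10 : n 1 * n 0 + m 1 * m 0 + crs n m 1 * crs n m 0 = 0 := by simpa using E 1 0
  have E12 : n 1 * n 2 + m 1 * m 2 + crs n m 1 * crs n m 2 = 0 := by simpa using E 1 2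
  have E20 : n 2 * n 0 + m 2 * m 0 + crs n m 2 * crs n m 0 = 0 := by simpa using E 2 0
  have E21 : n 2 * n 1 + m 2 * m 1 + crs n m 2 * crs n m 1 = 0 := by simpa using E 2 1
  have comp0 : (a1 * n 0 + a2 * n 1 + a3 * n 2) * n 0 + (a1 * m 0 + a2 * m 1 + a3 * m 2) * m 0
      + (a1 * crs n m 0 + a2 * crs n m 1 + a3 * crs n m 2) * crs n m 0 = a1 := by
    linear_combination a1 * E00 + a2 * E10 + a3 * E20
  have comp1 : (a1 * n 0 + a2 * n 1 + a3 * n 2) * n 1 + (a1 * m 0 + a2 * m 1 + a3 * m 2) * m 1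
      + (a1 * crs n m 0 + a2 * crs n m 1 + a3 * crs n m 2) * crs n m 1 = a2 := by
    linear_combination a1 * E01 + a2 * E11 + a3 * E21
  have comp2 : (a1 * n 0 + a2 * n 1 + a3 * n 2) * n 2 + (a1 * m 0 + a2 * m 1 + a3 * m 2) * m 2
      + (a1 * crs n m 0 + a2 * crs n m 1 + a3 * crs n m 2) * crs n m 2 = a3 := by
    linear_combination a1 * E02 + a2 * E12 + a3 * E22
  have hsum : a0 ^ 2 + (a1 * n 0 + a2 * n 1 + a3 * n 2) ^ 2
      + (a1 * m 0 + a2 * m 1 + a3 * m 2) ^ 2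
      + (a1 * crs n m 0 + a2 * crs n m 1 + a3 * crs n m 2) ^ 2 = 1 := by
    linear_combination hnorm + a1 * comp0 + a2 * comp1 + a3 * comp2
  set b := a1 * n 0 + a2 * n 1 + a3 * n 2 with hbdef
  set c := a1 * m 0 + a2 * m 1 + a3 * m 2 with hcdef
  set d := a1 * crs n m 0 + a2 * crs n m 1 + a3 * crs n m 2 with hddef
  set r := Real.sqrt (a0 ^ 2 + b ^ 2) with hrdef
  set s := Real.sqrt (c ^ 2 + d ^ 2) with hsdef
  have hr0 : 0 ≤ r := Real.sqrt_nonneg _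
  have hs0 : 0 ≤ s := Real.sqrt_nonneg _
  have hr2 : r ^ 2 = a0 ^ 2 + b ^ 2 := Real.sq_sqrt (by positivity)
  have hs2 : s ^ 2 = c ^ 2 + d ^ 2 := Real.sq_sqrt (by positivity)
  have hrs : r ^ 2 + s ^ 2 = 1 := by rw [hr2, hs2]; linarith [hsum]
  have hr1 : r ≤ 1 := le_one_of_sq_add_sq r s hr0 hrs
  obtain ⟨t, ht1, ht2⟩ := circle_param a0 b
  rw [← hrdef] at ht1 ht2
  obtain ⟨u, hu1, hu2⟩ := circle_param c d
  rw [← hsdef] at hu1 hu2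
  have hγc : Real.cos (2 * Real.arccos r / 2) = r := by
    rw [show 2 * Real.arccos r / 2 = Real.arccos r by ring,
      Real.cos_arccos (by linarith) hr1]
  have hγs : Real.sin (2 * Real.arccos r / 2) = s := by
    rw [show 2 * Real.arccos r / 2 = Real.arccos r by ring, Real.sin_arccos,
      show 1 - r ^ 2 = s ^ 2 by linarith, Real.sqrt_sq hs0]
  refine ⟨t + u, 2 * Real.arccos r, t - u, ?_⟩
  have e1 : Real.cos ((t + u) / 2) * Real.cos ((t - u) / 2)
      - Real.sin ((t + u) / 2) * Real.sin ((t - u) / 2) = Real.cos t := by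
    rw [← Real.cos_add]; congr 1; ring
  have e2 : Real.sin ((t + u) / 2) * Real.cos ((t - u) / 2)
      + Real.cos ((t + u) / 2) * Real.sin ((t - u) / 2) = Real.sin t := by
    rw [← Real.sin_add]; congr 1; ring
  have e3 : Real.cos ((t + u) / 2) * Real.cos ((t - u) / 2)
      + Real.sin ((t + u) / 2) * Real.sin ((t - u) / 2) = Real.cos u := by
    rw [← Real.cos_sub]; congr 1; ring
  have e4 : Real.sin ((t + u) / 2) * Real.cos ((t - u) / 2)
      - Real.cos ((t + u) / 2) * Real.sin ((t - u) / 2) = Real.sin u := by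
    rw [← Real.sin_sub]; congr 1; ring
  have k1 : Real.cos (2 * Real.arccos r / 2) * (Real.cos ((t + u) / 2) * Real.cos ((t - u) / 2)
      - Real.sin ((t + u) / 2) * Real.sin ((t - u) / 2)) = a0 := by rw [hγc, e1]; exact ht1
  have k2 : Real.cos (2 * Real.arccos r / 2) * (Real.sin ((t + u) / 2) * Real.cos ((t - u) / 2)
      + Real.cos ((t + u) / 2) * Real.sin ((t - u) / 2)) = b := by rw [hγc, e2]; exact ht2
  have k3 : Real.sin (2 * Real.arccos r / 2) * (Real.cos ((t + u) / 2) * Real.cos ((t - u) / 2)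
      + Real.sin ((t + u) / 2) * Real.sin ((t - u) / 2)) = c := by rw [hγs, e3]; exact hu1
  have k4 : Real.sin (2 * Real.arccos r / 2) * (Real.sin ((t + u) / 2) * Real.cos ((t - u) / 2)
      - Real.cos ((t + u) / 2) * Real.sin ((t - u) / 2)) = d := by rw [hγs, e4]; exact hu2
  have K1 : (Real.cos (2 * Real.arccos r / 2) : ℂ) *
      ((Real.cos ((t + u) / 2) : ℂ) * (Real.cos ((t - u) / 2) : ℂ)
        - (Real.sin ((t + u) / 2) : ℂ) * (Real.sin ((t - u) / 2) : ℂ)) = (a0 : ℂ) := by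
    exact_mod_cast k1
  have K2 : (Real.cos (2 * Real.arccos r / 2) : ℂ) *
      ((Real.sin ((t + u) / 2) : ℂ) * (Real.cos ((t - u) / 2) : ℂ)
        + (Real.cos ((t + u) / 2) : ℂ) * (Real.sin ((t - u) / 2) : ℂ)) = (b : ℂ) := by
    exact_mod_cast k2
  have K3 : (Real.sin (2 * Real.arccos r / 2) : ℂ) *
      ((Real.cos ((t + u) / 2) : ℂ) * (Real.cos ((t - u) / 2) : ℂ)
        + (Real.sin ((t + u) / 2) : ℂ) * (Real.sin ((t - u) / 2) : ℂ)) = (c : ℂ) := by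
    exact_mod_cast k3
  have K4 : (Real.sin (2 * Real.arccos r / 2) : ℂ) *
      ((Real.sin ((t + u) / 2) : ℂ) * (Real.cos ((t - u) / 2) : ℂ)
        - (Real.cos ((t + u) / 2) : ℂ) * (Real.sin ((t - u) / 2) : ℂ)) = (d : ℂ) := by
    exact_mod_cast k4
  have hNN := pauli_sq n hn
  have hNM := pauli_mul n m hnm
  have hMN := pauli_anticomm m n hmn
  have htp := triple_prod (pauli n) (pauli m) (pauli (crs n m)) hNN hNM hMN
    (Real.cos ((t + u) / 2) : ℂ) (Real.sin ((t + u) / 2) : ℂ)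
    (Real.cos (2 * Real.arccos r / 2) : ℂ) (Real.sin (2 * Real.arccos r / 2) : ℂ)
    (Real.cos ((t - u) / 2) : ℂ) (Real.sin ((t - u) / 2) : ℂ)
  have cc0 : (b : ℂ) * (n 0 : ℂ) + (c : ℂ) * (m 0 : ℂ) + (d : ℂ) * (crs n m 0 : ℂ)
      = (a1 : ℂ) := by exact_mod_cast comp0
  have cc1 : (b : ℂ) * (n 1 : ℂ) + (c : ℂ) * (m 1 : ℂ) + (d : ℂ) * (crs n m 1 : ℂ)
      = (a2 : ℂ) := by exact_mod_cast comp1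
  have cc2 : (b : ℂ) * (n 2 : ℂ) + (c : ℂ) * (m 2 : ℂ) + (d : ℂ) * (crs n m 2 : ℂ)
      = (a3 : ℂ) := by exact_mod_cast comp2
  have hAB : (a1 : ℂ) • σx + (a2 : ℂ) • σy + (a3 : ℂ) • σz
      = (b : ℂ) • pauli n + (c : ℂ) • pauli m + (d : ℂ) • pauli (crs n m) := by
    ext i j
    fin_cases i <;> fin_cases j <;>
      simp [pauli, σx, σy, σz] <;>
      first
        | linear_combination cc2
        | linear_combination -cc2
        | linear_combination cc0 - Complex.I * cc1
        | linear_combination cc0 + Complex.I * cc1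
        | linear_combination -cc0 - Complex.I * cc1
        | linear_combination -cc0 + Complex.I * cc1
        | ring
  have hRb : Rvec n (t + u) = (Real.cos ((t + u) / 2) : ℂ) • 1
      - (Complex.I * (Real.sin ((t + u) / 2) : ℂ)) • pauli n := rfl
  have hRg : Rvec m (2 * Real.arccos r) = (Real.cos (2 * Real.arccos r / 2) : ℂ) • 1
      - (Complex.I * (Real.sin (2 * Real.arccos r / 2) : ℂ)) • pauli m := rfl
  have hRd : Rvec n (t - u) = (Real.cos ((t - u) / 2) : ℂ) • 1
      - (Complex.I * (Real.sin ((t - u) / 2) : ℂ)) • pauli n := rfl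
  rw [hUrepr, hAB]
  rw [hRb, hRg, hRd]
  rw [htp]
  rw [K1, K2, K3, K4]
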